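/- arXiv:2012.15094 — 5 statements merged into one kernel-verified Lean document; each statement's English description precedes it below -/
import Mathlib

section
/- Let n, k, d, r, δ be positive integers with (r+δ-1) dividing n, r ≥ 1, δ ≥ 2, and suppose d = n - k + 1 - (⌈k/r⌉ - 1)(δ - 1). Then n - k = (δ-1)·n/(r+δ-1) + d - δ - (δ-1)·⌊(d-δ)/(r+δ-1)⌋. -/
/-- Reformulation of the Singleton-type bound for (r,δ)-LRCs when (r+δ-1) ∣ n. -/
theorem stmt0 (n k d r δ : ℤ) (hn : 0 < n) (hk : 0 < k) (hd : 0 < d)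
    (hr : 1 ≤ r) (hδ : 2 ≤ δ) (hdiv : (r + δ - 1) ∣ n)
    (hbound : d = n - k + 1 - (⌈(k : ℚ) / (r : ℚ)⌉ - 1) * (δ - 1)) :
    n - k = (δ - 1) * (n / (r + δ - 1)) + d - δ
      - (δ - 1) * ⌊((d : ℚ) - δ) / ((r : ℚ) + δ - 1)⌋ := by
  obtain ⟨q, hq⟩ := hdiv
  set a : ℤ := ⌈(k : ℚ) / (r : ℚ)⌉ with ha
  have hm : (0 : ℤ) < r + δ - 1 := by linarith
  have hrQ : (0 : ℚ) < (r : ℚ) := by exact_mod_cast (by linarith : (0:ℤ) < r)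
  -- k ≤ a * r
  have h1 : k ≤ a * r := by
    have h1' : (k : ℚ) ≤ (a : ℚ) * r := by
      rw [ha]; exact (div_le_iff₀ hrQ).mp (Int.le_ceil _)
    exact_mod_cast h1' 
  -- (a - 1) * r < k
  have h2 : (a - 1) * r < k := by
    have hlt : ((a : ℚ)) < (k : ℚ) / r + 1 := by rw [ha]; exact Int.ceil_lt_add_one _
    have h' : ((a : ℚ)) * r < ((k : ℚ) / r + 1) * r := mul_lt_mul_of_pos_right hlt hrQ
    rw [add_mul, div_mul_cancel₀ _ (ne_of_gt hrQ), one_mul] at h'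
    have h'' : ((a : ℚ) - 1) * r < k := by linarith
    exact_mod_cast h''
  set b : ℤ := a * r - k with hb
  have hb0 : 0 ≤ b := by omega
  have h2e : a * r - r < k := by nlinarith [h2]
  have hbr : b < r + δ - 1 := by omega
  -- d - δ = (r+δ-1)*(q-a) + b
  have hc : d - δ = (r + δ - 1) * (q - a) + b := by
    rw [hbound, hq, hb]; ring
  -- floor computation
  have hfloor : ⌊((d : ℚ) - δ) / ((r : ℚ) + δ - 1)⌋ = q - a := by
    rw [Int.floor_eq_iff]
    have hmQ : (0 : ℚ) < (r : ℚ) + δ - 1 := by exact_mod_cast hm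
    constructor
    · rw [le_div_iff₀ hmQ]
      have : ((q : ℚ) - a) * ((r : ℚ) + δ - 1) ≤ (d : ℚ) - δ := by
        have : (q - a) * (r + δ - 1) ≤ d - δ := by rw [hc, mul_comm]; linarith
        exact_mod_cast this
      push_cast at this ⊢
      linarith
    · rw [div_lt_iff₀ hmQ]
      have : (d : ℤ) - δ < (q - a + 1) * (r + δ - 1) := by rw [hc]; nlinarith
      have h'' : ((d : ℤ) - δ : ℚ) < (((q : ℤ) - a + 1) * (r + δ - 1) : ℤ) := by
        exact_mod_cast this
      push_cast at h'' ⊢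
      linarith
  rw [hfloor, hq, Int.mul_ediv_cancel_left _ (by omega : r + δ - 1 ≠ 0)]
  have hq' : n = (r + δ - 1) * q := hq
  nlinarith [hc]
end

section
/- Let R ≥ 2, δ ≥ 2, μ ≥ 3 be integers. For real ε with 0 < ε ≤ (μR)^(−3R), and for every integer i with 2 ≤ i ≤ μ such that δ/2 + 1/(2(μ-2)) ≤ (⌊(i-1)·δ/2⌋+1)/(i-1), we have ε^i · C(iR - ⌊(i-1)δ/2⌋ - 1, R)^i · n^{(δ/2 + 1/(2(μ-2)))·i − ⌊(i-1)δ/2⌋ − 1} < ε·n^{δ/2 + 1/(2(μ-2))} / (μ^{3i-3}·(R!)^i) for all sufficiently large n. -/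
open Filter

/-- Key natural-number estimate. -/
lemma natkey (R i μ : ℕ) (hR : 2 ≤ R) (hi : 2 ≤ i) (hμ : 3 ≤ μ) (hiμ : i ≤ μ) :
    (i * (R - 1)) ^ (R * i) * μ ^ (3 * (i - 1)) < (μ * R) ^ (3 * R * (i - 1)) := by
  have hμR : 1 ≤ μ * R := Nat.one_le_iff_ne_zero.2 (by positivity)
  have hbase : i * (R - 1) < μ * R := by
    calc i * (R - 1) ≤ μ * (R - 1) := Nat.mul_le_mul_right _ hiμ
    _ < μ * R := mul_lt_mul_of_pos_left (by omega) (by omega)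
  by_cases hc : R = 2 ∧ i = 2
  · obtain ⟨rfl, rfl⟩ := hc
    have : (2 * (2 - 1)) ^ (2 * 2) * μ ^ (3 * (2 - 1)) = 16 * μ ^ 3 := by norm_num
    rw [this]
    have h2 : (μ * 2) ^ (3 * 2 * (2 - 1)) = 64 * μ ^ 6 := by ring
    rw [h2]
    have hμ3 : 1 ≤ μ ^ 3 := Nat.one_le_pow _ _ (by omega)
    calc 16 * μ ^ 3 < 64 * μ ^ 3 := by
          have := hμ3; omega
    _ ≤ 64 * μ ^ 6 := by
          have : μ ^ 3 ≤ μ ^ 6 := Nat.pow_le_pow_right (by omega) (by omega)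
          omega
  · have hexp : R * i + 3 * (i - 1) ≤ 3 * R * (i - 1) := by
      rcases Nat.lt_or_ge R 3 with h3 | h3
      · -- R = 2, so i ≥ 3
        have hR2 : R = 2 := by omega
        have hi3 : 3 ≤ i := by
          rcases Nat.lt_or_ge i 3 with h | h
          · exact absurd ⟨hR2, by omega⟩ hc
          · exact h
        subst hR2; omega
      · nlinarith [Nat.sub_add_cancel (show 1 ≤ i by omega)]
    calc (i * (R - 1)) ^ (R * i) * μ ^ (3 * (i - 1))
        < (μ * R) ^ (R * i) * μ ^ (3 * (i - 1)) := by
          have hRi : R * i ≠ 0 := by positivity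
          exact mul_lt_mul_of_pos_right (Nat.pow_lt_pow_left hbase hRi)
            (Nat.pow_pos (by omega))
    _ ≤ (μ * R) ^ (R * i) * (μ * R) ^ (3 * (i - 1)) := by
          exact Nat.mul_le_mul_left _ (Nat.pow_le_pow_left (Nat.le_mul_of_pos_right _ (by omega)) _)
    _ = (μ * R) ^ (R * i + 3 * (i - 1)) := (pow_add _ _ _).symm
    _ ≤ (μ * R) ^ (3 * R * (i - 1)) := Nat.pow_le_pow_right hμR hexp

/-- The key expected-value inequality in the probabilistic deletion argument
(Claim 2 of the paper). -/
theorem stmt8 (R δ μ : ℕ) (hR : 2 ≤ R) (hδ : 2 ≤ δ) (hμ : 3 ≤ μ)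
    (ε : ℝ) (hε0 : 0 < ε) (hε1 : ε ≤ 1 / ((μ * R : ℕ) : ℝ) ^ (3 * R)) :
    ∀ i : ℕ, 2 ≤ i → i ≤ μ →
      (δ : ℝ) / 2 + 1 / (2 * ((μ : ℝ) - 2))
        ≤ (((((i - 1) * δ) / 2 : ℕ) : ℝ) + 1) / ((i : ℝ) - 1) →
      ∀ᶠ n : ℕ in atTop,
        ε ^ i * ((Nat.choose (i * R - ((i - 1) * δ) / 2 - 1) R : ℝ)) ^ i *
            (n : ℝ) ^ (((δ : ℝ) / 2 + 1 / (2 * ((μ : ℝ) - 2))) * i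
              - ((((i - 1) * δ) / 2 : ℕ) : ℝ) - 1)
          < ε * (n : ℝ) ^ ((δ : ℝ) / 2 + 1 / (2 * ((μ : ℝ) - 2)))
              / ((μ : ℝ) ^ (3 * i - 3) * (Nat.factorial R : ℝ) ^ i) := by
  intro i hi2 hiμ hexp
  set a : ℝ := (δ : ℝ) / 2 + 1 / (2 * ((μ : ℝ) - 2)) with ha
  set f : ℕ := ((i - 1) * δ) / 2 with hf
  set C : ℕ := Nat.choose (i * R - f - 1) R with hC
  set D : ℝ := (μ : ℝ) ^ (3 * i - 3) * (Nat.factorial R : ℝ) ^ i with hD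
  have hD0 : 0 < D := by positivity
  -- exponent inequality
  have hi1 : (0 : ℝ) < (i : ℝ) - 1 := by
    have : (2 : ℝ) ≤ (i : ℝ) := by exact_mod_cast hi2
    linarith
  have hexp' : a * i - (f : ℝ) - 1 ≤ a := by
    have h1 : a * ((i : ℝ) - 1) ≤ (f : ℝ) + 1 := (le_div_iff₀ hi1).mp hexp
    nlinarith
  -- constant inequality : ε^i * C^i < ε / D
  have hμR1 : (1 : ℝ) < ((μ * R : ℕ) : ℝ) := by
    have : 6 ≤ μ * R := by nlinarith
    exact_mod_cast (by omega : 1 < μ * R)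
  have hconst : ε ^ i * (C : ℝ) ^ i < ε / D := by
    rw [lt_div_iff₀ hD0]
    have hεpow : ε ^ (i - 1) ≤ (1 / ((μ * R : ℕ) : ℝ) ^ (3 * R)) ^ (i - 1) :=
      pow_le_pow_left₀ hε0.le hε1 _
    -- natural number inequality
    have hmle : i * R - f - 1 ≤ i * (R - 1) := by
      have hfge : i - 1 ≤ f := by
        have : (i - 1) * 2 ≤ (i - 1) * δ := Nat.mul_le_mul_left _ hδ
        calc i - 1 = ((i - 1) * 2) / 2 := by omega
        _ ≤ ((i - 1) * δ) / 2 := Nat.div_le_div_right this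
      have hmul : i * (R - 1) = i * R - i := by
        cases R with
        | zero => omega
        | succ r => simp [Nat.mul_succ]
      omega
    have hCR : C * Nat.factorial R ≤ (i * (R - 1)) ^ R := by
      calc C * Nat.factorial R = Nat.descFactorial (i * R - f - 1) R := by
            rw [Nat.descFactorial_eq_factorial_mul_choose]; ring
      _ ≤ (i * R - f - 1) ^ R := Nat.descFactorial_le_pow _ _
      _ ≤ (i * (R - 1)) ^ R := Nat.pow_le_pow_left hmle _
    have hnat : C ^ i * Nat.factorial R ^ i * μ ^ (3 * i - 3) < (μ * R) ^ (3 * R * (i - 1)) := by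
      calc C ^ i * Nat.factorial R ^ i * μ ^ (3 * i - 3)
          = (C * Nat.factorial R) ^ i * μ ^ (3 * (i - 1)) := by
            rw [show 3 * i - 3 = 3 * (i - 1) by omega, mul_pow]
      _ ≤ ((i * (R - 1)) ^ R) ^ i * μ ^ (3 * (i - 1)) :=
            Nat.mul_le_mul_right _ (Nat.pow_le_pow_left hCR _)
      _ = (i * (R - 1)) ^ (R * i) * μ ^ (3 * (i - 1)) := by rw [← pow_mul]
      _ < (μ * R) ^ (3 * R * (i - 1)) := natkey R i μ hR hi2 hμ hiμ
    -- put it together over ℝ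
    have hnatR : (C : ℝ) ^ i * D < ((μ * R : ℕ) : ℝ) ^ (3 * R * (i - 1)) := by
      rw [hD]
      have := hnat
      have h := (Nat.cast_lt (α := ℝ)).mpr hnat
      push_cast at h
      calc (C : ℝ) ^ i * ((μ : ℝ) ^ (3 * i - 3) * (Nat.factorial R : ℝ) ^ i)
          = (C : ℝ) ^ i * (Nat.factorial R : ℝ) ^ i * (μ : ℝ) ^ (3 * i - 3) := by ring
      _ < ((μ : ℝ) * (R : ℝ)) ^ (3 * R * (i - 1)) := h
      _ = ((μ * R : ℕ) : ℝ) ^ (3 * R * (i - 1)) := by push_cast; ring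
    have key : ε ^ (i - 1) * ((C : ℝ) ^ i * D) < 1 := by
      have h1 : ε ^ (i - 1) * ((C : ℝ) ^ i * D)
          ≤ (1 / ((μ * R : ℕ) : ℝ) ^ (3 * R)) ^ (i - 1) * ((C : ℝ) ^ i * D) := by
        apply mul_le_mul_of_nonneg_right hεpow (by positivity)
      have h2 : (1 / ((μ * R : ℕ) : ℝ) ^ (3 * R)) ^ (i - 1) * ((C : ℝ) ^ i * D) < 1 := by
        rw [div_pow, one_pow, ← pow_mul, div_mul_eq_mul_div, one_mul, div_lt_one (by positivity)]
        exact hnatR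
      exact lt_of_le_of_lt h1 h2
    have hεsplit : ε ^ i = ε * ε ^ (i - 1) := by
      conv_lhs => rw [show i = (i - 1) + 1 by omega]
      rw [pow_succ']
    calc ε ^ i * (C : ℝ) ^ i * D = ε * (ε ^ (i - 1) * ((C : ℝ) ^ i * D)) := by
          rw [hεsplit]; ring
    _ < ε * 1 := by exact mul_lt_mul_of_pos_left key hε0
    _ = ε := mul_one ε
  -- conclude eventually
  filter_upwards [eventually_ge_atTop 1] with n hn
  have hn1 : (1 : ℝ) ≤ (n : ℝ) := by exact_mod_cast hn
  have hpow : (n : ℝ) ^ (a * i - (f : ℝ) - 1) ≤ (n : ℝ) ^ a :=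
    Real.rpow_le_rpow_of_exponent_le hn1 hexp'
  have hpowpos : (0 : ℝ) < (n : ℝ) ^ a := Real.rpow_pos_of_pos (by linarith) a
  have hlhs0 : 0 ≤ ε ^ i * (C : ℝ) ^ i := by positivity
  calc ε ^ i * (C : ℝ) ^ i * (n : ℝ) ^ (a * i - (f : ℝ) - 1)
      ≤ ε ^ i * (C : ℝ) ^ i * (n : ℝ) ^ a := mul_le_mul_of_nonneg_left hpow hlhs0
  _ < (ε / D) * (n : ℝ) ^ a := by exact mul_lt_mul_of_pos_right hconst hpowpos
  _ = ε * (n : ℝ) ^ a / D := by ring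
end

section
/- Let q ≥ R = r + δ - 1 with δ ≥ 2, r ≥ 1, and let d satisfy δ+1 ≤ d ≤ 2δ. Let U be the (δ-1)×R Vandermonde matrix and V the (d-δ)×R matrix over F_q whose column generated by g ∈ G (|G| = R, G ⊆ F_q) is (1, g, …, g^{δ-2})ᵀ and (g^{δ-1}, …, g^{d-2})ᵀ respectively. Form the m(δ-1)+(d-δ) × mR matrix H with m copies of U in block-diagonal position and a bottom row of blocks (V, V, …, V). Then any d-1 columns of H are linearly independent. -/
open Polynomial Finset

lemma key_vandermonde {F : Type*} [Field F] {ι : Type*} [DecidableEq ι]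
    (S : Finset ι) (x : ι → F) (hx : Set.InjOn x S) (a : ι → F) (N : ℕ)
    (hS : S.card ≤ N)
    (h : ∀ k < N, ∑ c ∈ S, a c * x c ^ k = 0) :
    ∀ c ∈ S, a c = 0 := by
  intro c₀ hc₀
  set P : F[X] := ∏ c ∈ S.erase c₀, (X - C (x c)) with hP
  have hdeg : P.natDegree < N := by
    have h1 : P.natDegree = (S.erase c₀).card := by
      rw [hP, Polynomial.natDegree_prod]
      · simp [Polynomial.natDegree_X_sub_C]
      · intro c _; exact Polynomial.X_sub_C_ne_zero _
    have h2 := Finset.card_erase_of_mem hc₀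
    have h3 : 1 ≤ S.card := Finset.card_pos.mpr ⟨c₀, hc₀⟩
    omega
  have hsum : ∑ c ∈ S, a c * P.eval (x c) = 0 := by
    have heval : ∀ c ∈ S, a c * P.eval (x c)
        = ∑ k ∈ Finset.range N, a c * (P.coeff k * x c ^ k) := by
      intro c _
      rw [Polynomial.eval_eq_sum_range' hdeg, Finset.mul_sum]
    rw [Finset.sum_congr rfl heval, Finset.sum_comm]
    refine Finset.sum_eq_zero fun k hk => ?_
    have hk0 := h k (Finset.mem_range.mp hk)
    calc ∑ c ∈ S, a c * (P.coeff k * x c ^ k)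
        = P.coeff k * ∑ c ∈ S, a c * x c ^ k := by
          rw [Finset.mul_sum]; exact Finset.sum_congr rfl fun c _ => by ring
    _ = 0 := by rw [hk0, mul_zero]
  have hzero : ∀ c ∈ S.erase c₀, a c * P.eval (x c) = 0 := by
    intro c hc
    have : P.eval (x c) = 0 := by
      rw [hP, Polynomial.eval_prod]
      exact Finset.prod_eq_zero hc (by simp)
    rw [this, mul_zero]
  rw [← Finset.add_sum_erase _ _ hc₀, Finset.sum_eq_zero hzero, add_zero] at hsum
  have hne : P.eval (x c₀) ≠ 0 := by
    rw [hP, Polynomial.eval_prod]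
    refine Finset.prod_ne_zero_iff.mpr fun c hc => ?_
    simp only [Polynomial.eval_sub, eval_X, eval_C, sub_ne_zero]
    exact fun he => (Finset.ne_of_mem_erase hc)
      ((hx (Finset.mem_of_mem_erase hc) hc₀ he.symm))
  exact (mul_eq_zero.mp hsum).resolve_right hne

/-- Theorem 1: with all generating sets equal (G₁ = … = G_m = G, |G| = r+δ-1)
and δ+1 ≤ d ≤ 2δ, any d-1 columns of the block parity-check matrix H (m
block-diagonal copies of the (δ-1)-row Vandermonde matrix U on top, a bottom
row of copies of the (d-δ)-row matrix V) are linearly independent. -/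
theorem stmt13 (F : Type*) [Field F] [Fintype F] (r δ d m : ℕ)
    (hr : 1 ≤ r) (hδ : 2 ≤ δ) (hd1 : δ + 1 ≤ d) (hd2 : d ≤ 2 * δ)
    (hq : r + δ - 1 ≤ Fintype.card F)
    (g : Fin (r + δ - 1) → F) (hg : Function.Injective g)
    (T : Finset (Fin m × Fin (r + δ - 1))) (hT : T.card ≤ d - 1) :
    LinearIndependent F (fun c : T =>
      (Sum.elim
        (fun p : Fin m × Fin (δ - 1) =>
          if c.1.1 = p.1 then g c.1.2 ^ (p.2 : ℕ) else 0)
        (fun s : Fin (d - δ) => g c.1.2 ^ (δ - 1 + (s : ℕ)))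
        : (Fin m × Fin (δ - 1)) ⊕ Fin (d - δ) → F)) := by
  classical
  rw [Fintype.linearIndependent_iff]
  intro a ha c
  -- the "node" of a column
  set x : T → F := fun c => g c.1.2 with hx
  -- block subsets
  set S : Fin m → Finset T := fun i => Finset.univ.filter (fun c : T => c.1.1 = i)
    with hS
  have hxinj : ∀ i, Set.InjOn x (S i) := by
    intro i c hc c' hc' he
    simp only [hS, Finset.coe_filter, Set.mem_setOf_eq, Finset.mem_univ,
      true_and] at hc hc'
    have h2 : c.1.2 = c'.1.2 := hg he
    exact Subtype.ext (Prod.ext (hc.trans hc'.symm) h2)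
  have hcards : ∀ i, (S i).card ≤ T.card := by
    intro i
    calc (S i).card ≤ (Finset.univ : Finset T).card := Finset.card_le_card
          (Finset.filter_subset _ _)
    _ = T.card := by simp
  -- top equations
  have htop : ∀ (i : Fin m) (k : ℕ), k < δ - 1 →
      ∑ c ∈ S i, a c * x c ^ k = 0 := by
    intro i k hk
    have h0 := congrFun ha (Sum.inl (i, ⟨k, hk⟩))
    simp only [Finset.sum_apply, Pi.smul_apply, Sum.elim_inl, smul_eq_mul,
      Pi.zero_apply, mul_ite, mul_zero] at h0
    rw [hS, Finset.sum_filter]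
    exact h0
  -- bottom equations
  have hbot : ∀ s : ℕ, s < d - δ →
      ∑ c : T, a c * x c ^ (δ - 1 + s) = 0 := by
    intro s hs
    have h0 := congrFun ha (Sum.inr ⟨s, hs⟩)
    simpa only [Finset.sum_apply, Pi.smul_apply, Sum.elim_inr, smul_eq_mul,
      Pi.zero_apply] using h0
  -- columns in small blocks vanish
  have hsmall : ∀ c : T, (S c.1.1).card ≤ δ - 1 → a c = 0 := by
    intro c hcard
    refine key_vandermonde (S c.1.1) x (hxinj _) a (δ - 1) hcard
      (fun k hk => htop _ k hk) c ?_
    simp [hS]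
  -- now the general case
  by_cases hbig : (S c.1.1).card ≤ δ - 1
  · exact hsmall c hbig
  push_neg at hbig
  set i₀ := c.1.1
  -- all other blocks are small
  have hother : ∀ c' : T, c'.1.1 ≠ i₀ → a c' = 0 := by
    intro c' hne
    refine hsmall c' ?_
    have hdisj : Disjoint (S c'.1.1) (S i₀) := by
      refine Finset.disjoint_filter_filter' _ _ ?_
      intro p hp1 hp2 y hy
      exact absurd ((hp1 y hy).symm.trans (hp2 y hy)) hne
    have := Finset.card_union_of_disjoint hdisj ▸
      (Finset.card_le_card (Finset.subset_univ ((S c'.1.1) ∪ (S i₀))))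
    have hu : (S c'.1.1).card + (S i₀).card ≤ T.card := by
      rw [← Finset.card_union_of_disjoint hdisj]
      calc ((S c'.1.1) ∪ (S i₀)).card ≤ (Finset.univ : Finset T).card :=
            Finset.card_le_card (Finset.subset_univ _)
      _ = T.card := by simp
    omega
  -- full Vandermonde equations for the big block
  have hfull : ∀ k < d - 1, ∑ c' ∈ S i₀, a c' * x c' ^ k = 0 := by
    intro k hk
    by_cases hkδ : k < δ - 1
    · exact htop i₀ k hkδ
    · push_neg at hkδ
      have hs : k - (δ - 1) < d - δ := by omega
      have h0 := hbot (k - (δ - 1)) hs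
      have hks : δ - 1 + (k - (δ - 1)) = k := by omega
      rw [hks] at h0
      rw [← h0, hS, Finset.sum_filter]
      refine Finset.sum_congr rfl fun c' _ => ?_
      by_cases hc' : c'.1.1 = i₀
      · rw [if_pos hc']
      · rw [if_neg hc', hother c' hc', zero_mul]
  refine key_vandermonde (S i₀) x (hxinj _) a (d - 1) ?_ hfull c ?_
  · exact le_trans (hcards i₀) hT
  · simp [hS, i₀]
end

section
/- Let m₁, m₂, r₂, δ₂, d₂ be positive integers with δ₂ ≥ 2, δ₂ < d₂ < r₂ + δ₂, m₁ < r₂/(d₂-δ₂), and let r₁ satisfy r₁(1 − 1/m₁) < m₂r₂ − d₂ + δ₂ ≤ r₁. Set k = m₁(m₂r₂ − d₂ + δ₂) and n = m₁m₂(r₂+δ₂−1). Then ⌈k/r₂⌉ = m₁m₂, ⌈k/r₁⌉ = m₁, and n − k + 1 − (⌈k/r₂⌉−1)(δ₂−1) − (⌈k/r₁⌉−1)(d₂−δ₂) = d₂. -/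
/-- Parameter verification in Theorem 9: the constructed hierarchical LRC
meets the Singleton-type bound for H-LRCs with δ₁ = d₂. -/
theorem stmt17 (m₁ m₂ r₂ δ₂ d₂ r₁ k n : ℤ)
    (hm₁ : 1 ≤ m₁) (hm₂ : 1 ≤ m₂) (hr₁ : 1 ≤ r₁) (hr₂ : 1 ≤ r₂)
    (hδ : 2 ≤ δ₂) (hd1 : δ₂ < d₂) (hd2 : d₂ < r₂ + δ₂)
    (hm : (m₁ : ℚ) < (r₂ : ℚ) / ((d₂ : ℚ) - δ₂))
    (hr1a : (r₁ : ℚ) * (1 - 1 / (m₁ : ℚ)) < (m₂ : ℚ) * r₂ - d₂ + δ₂)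
    (hr1b : m₂ * r₂ - d₂ + δ₂ ≤ r₁)
    (hk : k = m₁ * (m₂ * r₂ - d₂ + δ₂)) (hn : n = m₁ * m₂ * (r₂ + δ₂ - 1)) :
    ⌈(k : ℚ) / (r₂ : ℚ)⌉ = m₁ * m₂ ∧
    ⌈(k : ℚ) / (r₁ : ℚ)⌉ = m₁ ∧
    n - k + 1 - (⌈(k : ℚ) / (r₂ : ℚ)⌉ - 1) * (δ₂ - 1)
      - (⌈(k : ℚ) / (r₁ : ℚ)⌉ - 1) * (d₂ - δ₂) = d₂ := by
  have hr₂Q : (0:ℚ) < (r₂:ℚ) := by exact_mod_cast lt_of_lt_of_le one_pos hr₂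
  have hr₁Q : (0:ℚ) < (r₁:ℚ) := by exact_mod_cast lt_of_lt_of_le one_pos hr₁
  have hm₁Q : (0:ℚ) < (m₁:ℚ) := by exact_mod_cast lt_of_lt_of_le one_pos hm₁
  have hdδ : (0:ℚ) < (d₂:ℚ) - δ₂ := by
    have : (δ₂:ℚ) < d₂ := by exact_mod_cast hd1
    linarith
  have hm' : (m₁:ℚ) * ((d₂:ℚ) - δ₂) < r₂ := (lt_div_iff₀ hdδ).mp hm
  have hkQ : (k:ℚ) = m₁ * (m₂ * r₂ - d₂ + δ₂) := by rw [hk]; push_cast; ring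
  have hr1bQ : (m₂:ℚ) * r₂ - d₂ + δ₂ ≤ r₁ := by exact_mod_cast hr1b
  have hr1a' : (r₁:ℚ) * m₁ - r₁ < m₁ * ((m₂:ℚ) * r₂ - d₂ + δ₂) := by
    have h := mul_lt_mul_of_pos_left hr1a hm₁Q
    have : (m₁:ℚ) * ((r₁:ℚ) * (1 - 1 / m₁)) = r₁ * m₁ - r₁ := by
      field_simp
    nlinarith [this]
  have h1 : ⌈(k : ℚ) / (r₂ : ℚ)⌉ = m₁ * m₂ := by
    rw [Int.ceil_eq_iff]
    constructor
    · rw [lt_div_iff₀ hr₂Q, hkQ]; push_cast; nlinarith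
    · rw [div_le_iff₀ hr₂Q, hkQ]; push_cast; nlinarith
  have h2 : ⌈(k : ℚ) / (r₁ : ℚ)⌉ = m₁ := by
    rw [Int.ceil_eq_iff]
    constructor
    · rw [lt_div_iff₀ hr₁Q, hkQ]; push_cast; nlinarith
    · rw [div_le_iff₀ hr₁Q, hkQ]; push_cast; nlinarith
  refine ⟨h1, h2, ?_⟩
  rw [h1, h2, hk, hn]; ring
end

section
/- Let h, δ, γ, s be nonnegative integers with δ ≥ 2, 1 ≤ h ≤ δ, and either (γ ≤ h and s = h+δ-1-2γ) or (h < γ < δ-1 and s = δ-1-γ). Let F₁,…,F_{l+2} be finite sets where F_i ⊆ G for i ≤ l+1 (|G| = r+δ-1) and F_{l+2} is a set of size at most min(γ,h) plus additional erasures, such that the total erasure pattern consists of γ full columns of an (l+2)×(r+δ-1) array and s additional entries. Then |∪_{i: |F_i| ≥ δ} F_i| + |F_{l+2}| ≤ h + δ - 1. -/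
open Finset

/-- Counting step of Theorem 10 (GSD codes from Construction C): an erasure
pattern made of γ full columns of the (l+2)×(r+δ-1) array plus s extra sectors
satisfies |∪_{i : |E_i| ≥ δ} E_i| + |E_{l+2}| ≤ h + δ - 1. -/
theorem stmt18 (l r δ h γ s : ℕ) (hr : 1 ≤ r) (hδ : 2 ≤ δ)
    (hh1 : 1 ≤ h) (hh2 : h ≤ δ)
    (hcase : (γ ≤ h ∧ (s : ℤ) = (h : ℤ) + δ - 1 - 2 * γ) ∨
      (h < γ ∧ γ < δ - 1 ∧ (s : ℤ) = (δ : ℤ) - 1 - γ))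
    (E : Fin (l + 1) → Finset (Fin (r + δ - 1)))
    (Elast : Finset (Fin (r + δ - 1)))
    (hElast : Elast ⊆ univ.filter (fun a => (a : ℕ) < h))
    (hpattern : ∃ Γ : Finset (Fin (r + δ - 1)), Γ.card = γ ∧
      (∀ i, Γ ⊆ E i) ∧ (Γ.filter (fun a : Fin (r + δ - 1) => (a : ℕ) < h) ⊆ Elast) ∧
      (∑ i, ((E i) \ Γ).card) + (Elast \ Γ).card ≤ s) :
    ((univ.filter (fun i => δ ≤ (E i).card)).biUnion E).card + Elast.card
      ≤ h + δ - 1 := by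
  classical
  obtain ⟨Γ, hΓcard, hΓsub, hΓlast, hsum⟩ := hpattern
  set S1 := ∑ i, ((E i) \ Γ).card with hS1
  set S2 := (Elast \ Γ).card with hS2
  -- bound on the big union
  have key1 : ((univ.filter (fun i => δ ≤ (E i).card)).biUnion E).card ≤ γ + S1 := by
    have hsub : ((univ.filter (fun i => δ ≤ (E i).card)).biUnion E)
        ⊆ Γ ∪ univ.biUnion (fun i => (E i) \ Γ) := by
      intro x hx
      simp only [mem_biUnion, mem_filter, mem_union, mem_sdiff] at hx ⊢
      obtain ⟨i, _, hxi⟩ := hx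
      by_cases hxΓ : x ∈ Γ
      · exact Or.inl hxΓ
      · exact Or.inr ⟨i, mem_univ i, hxi, hxΓ⟩
    calc ((univ.filter (fun i => δ ≤ (E i).card)).biUnion E).card
        ≤ (Γ ∪ univ.biUnion (fun i => (E i) \ Γ)).card := card_le_card hsub
      _ ≤ Γ.card + (univ.biUnion (fun i => (E i) \ Γ)).card := card_union_le _ _
      _ ≤ γ + S1 := by
          rw [hΓcard]
          exact Nat.add_le_add_left (card_biUnion_le) _
  -- Elast is inside the first h coordinates
  have key2a : Elast.card ≤ h := by
    have : Elast.card ≤ (univ.filter (fun a : Fin (r + δ - 1) => (a : ℕ) < h)).card :=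
      card_le_card hElast
    refine this.trans ?_
    have hinj : ∀ a ∈ univ.filter (fun a : Fin (r + δ - 1) => (a : ℕ) < h),
        (a : ℕ) ∈ Finset.range h := by
      intro a ha
      simp only [mem_filter] at ha
      simpa using ha.2
    calc (univ.filter (fun a : Fin (r + δ - 1) => (a : ℕ) < h)).card
        ≤ (Finset.range h).card := by
          apply Finset.card_le_card_of_injOn (fun a : Fin (r + δ - 1) => (a : ℕ)) hinj
          intro a _ b _ hab
          exact Fin.val_injective hab
      _ = h := Finset.card_range h
  have key2b : Elast.card ≤ γ + S2 := by
    have hsub : Elast ⊆ (Γ.filter (fun a : Fin (r + δ - 1) => (a : ℕ) < h)) ∪ (Elast \ Γ) := by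
      intro x hx
      by_cases hxΓ : x ∈ Γ
      · refine mem_union_left _ (mem_filter.mpr ⟨hxΓ, ?_⟩)
        have := hElast hx
        simp only [mem_filter] at this
        exact this.2
      · exact mem_union_right _ (mem_sdiff.mpr ⟨hx, hxΓ⟩)
    calc Elast.card ≤ _ := card_le_card hsub
      _ ≤ (Γ.filter (fun a : Fin (r + δ - 1) => (a : ℕ) < h)).card + S2 := card_union_le _ _
      _ ≤ γ + S2 := by
          refine Nat.add_le_add_right ?_ _
          rw [← hΓcard]; exact card_le_card (filter_subset _ _)
  omega
end
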